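/- arXiv:2301.07638 — 10 statements merged into one kernel-verified Lean document; each statement's English description precedes it below -/
import Mathlib

section
/- Let G : ℝ → ℝ be continuous with 0 < G(v) < 1 and G(v) = 1 − G(−v) for all v, let q(w) = G(w)/(1 − G(w)), let g : ℝ → ℝ be continuous, even, and nonnegative, and let k > 0. Define φ(v) = k − ∫₀^v q(w)^{−1/2}·g(w) dw. Then φ is differentiable with φ′(v) = −q(v)^{−1/2}·g(v), φ is non-increasing on ℝ, and φ is conformable to G, i.e. φ′(−v)·(1 − G(v)) = φ′(v)·G(v) for all v ∈ ℝ. -/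
open MeasureTheory intervalIntegral

/-- a loss `φ v = k - ∫₀^v q(w)^{-1/2} g(w) dw` built from a symmetric
CDF `G` (odds `q = G/(1-G)`) and a continuous, even, nonnegative weight `g` is
differentiable with `φ' v = -q(v)^{-1/2} g(v)`, is non-increasing, and is
conformable to `G`: `φ'(-v)·(1 - G v) = φ'(v)·G v` for all `v`. -/
theorem stmt_1 (G g : ℝ → ℝ) (k : ℝ)
    (hGcont : Continuous G)
    (hG01 : ∀ v, 0 < G v ∧ G v < 1)
    (hGsym : ∀ v, G v = 1 - G (-v))
    (hgcont : Continuous g) (hgeven : ∀ w, g (-w) = g w) (hgnn : ∀ w, 0 ≤ g w)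
    (hk : 0 < k) :
    let q : ℝ → ℝ := fun w => G w / (1 - G w)
    let φ : ℝ → ℝ := fun v => k - ∫ w in (0:ℝ)..v, (Real.sqrt (q w))⁻¹ * g w
    (∀ v, HasDerivAt φ (-((Real.sqrt (q v))⁻¹ * g v)) v) ∧
    Antitone φ ∧
    (∀ v, deriv φ (-v) * (1 - G v) = deriv φ v * G v) := by
  intro q φ
  have hb : ∀ v, 0 < 1 - G v := fun v => by linarith [(hG01 v).2]
  have hfcont : Continuous (fun w => (Real.sqrt (q w))⁻¹ * g w) := by
    apply Continuous.mul _ hgcont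
    apply Continuous.inv₀
    · exact (hGcont.div (continuous_const.sub hGcont) (fun v => (hb v).ne')).sqrt
    · intro v
      refine (Real.sqrt_pos.mpr ?_).ne'
      exact div_pos (hG01 v).1 (hb v)
  have hderiv : ∀ v, HasDerivAt φ (-((Real.sqrt (q v))⁻¹ * g v)) v := by
    intro v
    have h1 : HasDerivAt (fun v => ∫ w in (0:ℝ)..v, (Real.sqrt (q w))⁻¹ * g w)
        ((Real.sqrt (q v))⁻¹ * g v) v :=
      intervalIntegral.integral_hasDerivAt_right
        (hfcont.intervalIntegrable _ _)
        (hfcont.stronglyMeasurableAtFilter _ _) hfcont.continuousAt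
    have h2 := (hasDerivAt_const v k).sub h1
    rw [zero_sub] at h2
    exact h2
  refine ⟨hderiv, ?_, ?_⟩
  · apply antitone_of_deriv_nonpos
    · exact fun v => (hderiv v).differentiableAt
    · intro v
      rw [(hderiv v).deriv]
      have : 0 ≤ (Real.sqrt (q v))⁻¹ * g v :=
        mul_nonneg (inv_nonneg.mpr (Real.sqrt_nonneg _)) (hgnn v)
      linarith
  · intro v
    rw [(hderiv v).deriv, (hderiv (-v)).deriv]
    have hGneg : G (-v) = 1 - G v := by have := hGsym v; linarith
    have ha := (hG01 v).1
    have hbv := hb v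
    have hsa : Real.sqrt (G v) > 0 := Real.sqrt_pos.mpr ha
    have hsb : Real.sqrt (1 - G v) > 0 := Real.sqrt_pos.mpr hbv
    have hqv : q v = G v / (1 - G v) := rfl
    have hqnv : q (-v) = (1 - G v) / G v := by simp [q, hGneg]
    rw [hqv, hqnv, hgeven, Real.sqrt_div' _ ha.le, Real.sqrt_div' _ hbv.le]
    have h1 : Real.sqrt (G v) * Real.sqrt (G v) = G v := Real.mul_self_sqrt ha.le
    have h2 : Real.sqrt (1 - G v) * Real.sqrt (1 - G v) = 1 - G v :=
      Real.mul_self_sqrt hbv.le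
    field_simp
    linear_combination (g v * (G v - 1)) * h1 + (G v * g v) * h2
end

section
/- Let G : ℝ → ℝ be continuous with 0 < G(v) < 1 and G(v) = 1 − G(−v) for all v, and let q(w) = G(w)/(1 − G(w)). Suppose φ : ℝ → ℝ is non-increasing, differentiable with continuous derivative, and conformable to G, i.e. φ′(−v)·(1 − G(v)) = φ′(v)·G(v) for all v. Then there exists a continuous, even, nonnegative function g : ℝ → ℝ such that φ′(v) = −q(v)^{−1/2}·g(v) for all v, and consequently φ(v) = φ(0) − ∫₀^v q(w)^{−1/2}·g(w) dw for all v ∈ ℝ. -/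
open MeasureTheory intervalIntegral

lemma antitone_deriv_nonpos' {f : ℝ → ℝ} (hf : Antitone f) {v : ℝ}
    (hd : DifferentiableAt ℝ f v) : deriv f v ≤ 0 := by
  have h : Filter.Tendsto (slope f v) (nhdsWithin v {v}ᶜ) (nhds (deriv f v)) :=
    (hasDerivAt_iff_tendsto_slope.mp hd.hasDerivAt)
  refine le_of_tendsto h ?_
  filter_upwards [self_mem_nhdsWithin] with y hy
  rcases lt_or_gt_of_ne (Ne.symm hy) with hlt | hgt
  · rw [slope_def_field]
    exact div_nonpos_of_nonpos_of_nonneg (by linarith [hf hlt.le]) (by linarith)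
  · rw [slope_def_field]
    exact div_nonpos_of_nonneg_of_nonpos (by linarith [hf hgt.le]) (by linarith)

/-- conversely, any non-increasing, continuously differentiable loss `φ`
conformable to a symmetric CDF `G` has derivative `φ' v = -q(v)^{-1/2} g(v)` for a
continuous, even, nonnegative weight `g`, and hence
`φ v = φ 0 - ∫₀^v q(w)^{-1/2} g(w) dw`. -/
theorem stmt_2 (G φ : ℝ → ℝ)
    (hGcont : Continuous G)
    (hG01 : ∀ v, 0 < G v ∧ G v < 1)
    (hGsym : ∀ v, G v = 1 - G (-v))
    (hφdiff : Differentiable ℝ φ)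
    (hφ'cont : Continuous (deriv φ))
    (hφanti : Antitone φ)
    (hconf : ∀ v, deriv φ (-v) * (1 - G v) = deriv φ v * G v) :
    ∃ g : ℝ → ℝ, Continuous g ∧ (∀ w, g (-w) = g w) ∧ (∀ w, 0 ≤ g w) ∧
      (∀ v, deriv φ v = -((Real.sqrt (G v / (1 - G v)))⁻¹ * g v)) ∧
      (∀ v, φ v = φ 0 - ∫ w in (0:ℝ)..v, (Real.sqrt (G w / (1 - G w)))⁻¹ * g w) := by
  set q : ℝ → ℝ := fun w => G w / (1 - G w) with hq
  have hqpos : ∀ w, 0 < q w := fun w =>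
    div_pos (hG01 w).1 (by linarith [(hG01 w).2])
  have hsqrtpos : ∀ w, 0 < Real.sqrt (q w) := fun w => Real.sqrt_pos.mpr (hqpos w)
  refine ⟨fun w => -deriv φ w * Real.sqrt (q w), ?_, ?_, ?_, ?_, ?_⟩
  · exact (hφ'cont.neg).mul (Real.continuous_sqrt.comp
      (hGcont.div (continuous_const.sub hGcont) (fun w => by linarith [(hG01 w).2])))
  · intro w
    have hGneg : G (-w) = 1 - G w := by
      have := hGsym (-w); rw [neg_neg] at this; linarith
    have hqneg : q (-w) = (q w)⁻¹ := by
      simp only [hq, hGneg]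
      rw [inv_div]
      ring_nf
    have hne : (1:ℝ) - G w ≠ 0 := by linarith [(hG01 w).2]
    have hderiv : deriv φ (-w) = deriv φ w * q w := by
      have h := hconf w
      show deriv φ (-w) = deriv φ w * (G w / (1 - G w))
      rw [← mul_div_assoc, eq_div_iff hne]
      exact h
    have hsq : Real.sqrt (q w) * Real.sqrt (q w) = q w := Real.mul_self_sqrt (hqpos w).le
    show -deriv φ (-w) * Real.sqrt (q (-w)) = -deriv φ w * Real.sqrt (q w)
    rw [hqneg, hderiv, Real.sqrt_inv]
    have hne' : Real.sqrt (q w) ≠ 0 := (hsqrtpos w).ne'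
    have hsq2 : Real.sqrt (q w) ^ 2 = G w * (1 - G w)⁻¹ := by
      rw [sq, hsq]; exact div_eq_mul_inv _ _
    field_simp
    linear_combination (deriv φ w) * hsq2
  · intro w
    exact mul_nonneg (by linarith [antitone_deriv_nonpos' hφanti (hφdiff w)]) (hsqrtpos w).le
  · intro v
    have h := hsqrtpos v
    field_simp
    exact (mul_div_cancel_right₀ _ h.ne').symm
  · intro v
    have key : ∀ w, (Real.sqrt (q w))⁻¹ * (-deriv φ w * Real.sqrt (q w)) = -deriv φ w := by
      intro w
      have h := hsqrtpos w
      field_simp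
    have hFTC : (∫ w in (0:ℝ)..v, deriv φ w) = φ v - φ 0 :=
      intervalIntegral.integral_deriv_eq_sub (fun x _ => hφdiff x) hφ'cont.continuousOn.intervalIntegrable
    have : (∫ w in (0:ℝ)..v, (Real.sqrt (q w))⁻¹ * (-deriv φ w * Real.sqrt (q w)))
        = ∫ w in (0:ℝ)..v, -deriv φ w := by
      simp only [key]
    rw [this, intervalIntegral.integral_neg, hFTC]
    ring
end

section
/- Let G : ℝ → ℝ be differentiable with 0 < G(v) < 1 and G(v) = 1 − G(−v) for all v, let q(w) = G(w)/(1 − G(w)), and let g : ℝ → ℝ be differentiable, even, and strictly positive. Let φ : ℝ → ℝ be differentiable with φ′(v) = −q(v)^{−1/2}·g(v) for all v. Then φ is convex on ℝ if and only if g′(v)/g(v) ≤ (1/2)·q′(v)/q(v) for all v ∈ ℝ (i.e. (d/dv) log g(v) ≤ (1/2)(d/dv) log q(v)). -/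
open Set Filter

/-- A differentiable monotone function has nonnegative derivative. -/
lemma mono_hasDerivAt_nonneg {f : ℝ → ℝ} {d x : ℝ} (hm : Monotone f)
    (hd : HasDerivAt f d x) : 0 ≤ d := by
  have h := hasDerivAt_iff_tendsto_slope.mp hd
  have h2 : Tendsto (slope f x) (nhdsWithin x (Set.Ioi x)) (nhds d) :=
    h.mono_left (nhdsWithin_mono x fun y hy => ne_of_gt hy)
  refine ge_of_tendsto h2 ?_
  filter_upwards [self_mem_nhdsWithin] with y hy
  rw [slope_def_field]
  exact div_nonneg (sub_nonneg.2 (hm (le_of_lt hy))) (sub_nonneg.2 (le_of_lt hy))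

lemma aux_stmt4 (q g φ : ℝ → ℝ) (hqpos : ∀ v, 0 < q v) (hqdiff : Differentiable ℝ q)
    (hgdiff : Differentiable ℝ g) (hgpos : ∀ w, 0 < g w)
    (hφ : ∀ v, HasDerivAt φ (-((Real.sqrt (q v))⁻¹ * g v)) v) :
    ConvexOn ℝ Set.univ φ ↔
      ∀ v, deriv g v / g v ≤ (1 / 2) * (deriv q v / q v) := by
  set ψ : ℝ → ℝ := fun w => -((Real.sqrt (q w))⁻¹ * g w) with hψdef
  set D : ℝ → ℝ := fun v =>
    -(-(1 / (2 * Real.sqrt (q v)) * deriv q v) / (Real.sqrt (q v)) ^ 2 * g v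
      + (Real.sqrt (q v))⁻¹ * deriv g v) with hDdef
  have hsq : ∀ v, 0 < Real.sqrt (q v) := fun v => Real.sqrt_pos.2 (hqpos v)
  have hψder : ∀ v, HasDerivAt ψ (D v) v := by
    intro v
    have h1 : HasDerivAt (fun w => Real.sqrt (q w))
        (1 / (2 * Real.sqrt (q v)) * deriv q v) v :=
      (Real.hasDerivAt_sqrt (hqpos v).ne').comp v (hqdiff v).hasDerivAt
    have h2 := h1.inv (hsq v).ne'
    exact (h2.mul (hgdiff v).hasDerivAt).neg
  have hderφ : deriv φ = ψ := funext fun v => (hφ v).deriv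
  have key : ∀ v, (0 ≤ D v ↔ deriv g v / g v ≤ (1 / 2) * (deriv q v / q v)) := by
    intro v
    set s := Real.sqrt (q v) with hsdef
    have hs : 0 < s := hsq v
    have hs2 : s ^ 2 = q v := Real.sq_sqrt (hqpos v).le
    have hDv : D v = s⁻¹ * (g v * deriv q v / (2 * q v) - deriv g v) := by
      rw [hDdef]
      simp only
      rw [← hs2]
      field_simp
      rw [Real.sqrt_sq hs.le]
      ring
    rw [hDv, mul_nonneg_iff_of_pos_left (inv_pos.2 hs), sub_nonneg,
      div_le_iff₀ (hgpos v)]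
    have : (1 / 2) * (deriv q v / q v) * g v = g v * deriv q v / (2 * q v) := by
      field_simp
    rw [this]
  constructor
  · intro hconv v
    have hmono : Monotone ψ := by
      rw [← hderφ]
      have := hconv.monotoneOn_deriv fun x _ => (hφ x).differentiableAt
      exact fun a b hab => this (mem_univ a) (mem_univ b) hab
    exact (key v).1 (mono_hasDerivAt_nonneg hmono (hψder v))
  · intro h
    have hmono : Monotone ψ :=
      monotone_of_deriv_nonneg (fun v => (hψder v).differentiableAt)
        (fun v => by rw [(hψder v).deriv]; exact (key v).2 (h v))
    refine MonotoneOn.convexOn_of_deriv convex_univ ?_ ?_ ?_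
    · exact fun x _ => ((hφ x).differentiableAt.continuousAt).continuousWithinAt
    · exact fun x _ => (hφ x).differentiableAt.differentiableWithinAt
    · rw [hderφ, interior_univ]
      exact fun a _ b _ hab => hmono hab

/-- for `φ` in the class `L_G` (i.e. `φ' v = -q(v)^{-1/2} g(v)` with `g`
differentiable, even, strictly positive, and `q = G/(1-G)` the odds of a
differentiable symmetric CDF `G`), `φ` is convex on ℝ if and only if
`(d/dv) log g(v) ≤ (1/2)(d/dv) log q(v)`, i.e. `g'(v)/g(v) ≤ (1/2)·q'(v)/q(v)`. -/
theorem stmt_4 (G g φ : ℝ → ℝ)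
    (hGdiff : Differentiable ℝ G)
    (hG01 : ∀ v, 0 < G v ∧ G v < 1)
    (hGsym : ∀ v, G v = 1 - G (-v))
    (hgdiff : Differentiable ℝ g)
    (hgeven : ∀ w, g (-w) = g w)
    (hgpos : ∀ w, 0 < g w)
    (hφ : ∀ v, HasDerivAt φ (-((Real.sqrt (G v / (1 - G v)))⁻¹ * g v)) v) :
    ConvexOn ℝ Set.univ φ ↔
      ∀ v, deriv g v / g v ≤
        (1 / 2) * (deriv (fun w => G w / (1 - G w)) v / (G v / (1 - G v))) := by
  have hden : ∀ v, 0 < 1 - G v := fun v => sub_pos.2 (hG01 v).2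
  exact aux_stmt4 (fun w => G w / (1 - G w)) g φ
    (fun v => div_pos (hG01 v).1 (hden v))
    (hGdiff.div ((differentiable_const 1).sub hGdiff) fun v => (hden v).ne')
    hgdiff hgpos hφ
end

section
/- Let G : ℝ → ℝ be differentiable with 0 < G(v) < 1, G(v) = 1 − G(−v), and G′(v) > 0 for all v, and let q(w) = G(w)/(1 − G(w)). Suppose φ : ℝ → ℝ is differentiable with φ′(v) = −q(v)^{−1/2}·g₀(v) for all v, where g₀ is even and nonnegative. Then there exists an even nonnegative function g : ℝ → ℝ such that φ′(v) = −g(v)·G′(v)/G(v) for all v; that is, the derivative of φ is an even nonnegative weight function times the derivative (d/dv) log G(v) of the log-likelihood. -/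
lemma key_aux (a : ℝ) (h0 : 0 < a) (h1 : a < 1) :
    (Real.sqrt (a / (1 - a)))⁻¹ * a = Real.sqrt a * Real.sqrt (1 - a) := by
  rw [Real.sqrt_div h0.le, inv_div, div_mul_eq_mul_div, mul_comm,
    div_eq_iff (Real.sqrt_pos.mpr h0).ne']
  linear_combination -Real.sqrt (1 - a) * Real.sq_sqrt h0.le

/-- if `φ' v = -q(v)^{-1/2}·g₀(v)` with `g₀` even and nonnegative,
where `q = G/(1-G)` for a differentiable symmetric CDF `G` with positive density,
then `φ' v = -g(v)·G'(v)/G(v)` for some even nonnegative weight `g`; i.e. the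
derivative of `φ` is a weighted log-likelihood score. -/
theorem stmt_7 (G g₀ φ : ℝ → ℝ)
    (hGdiff : Differentiable ℝ G)
    (hG01 : ∀ v, 0 < G v ∧ G v < 1)
    (hGsym : ∀ v, G v = 1 - G (-v))
    (hG'pos : ∀ v, 0 < deriv G v)
    (hg₀even : ∀ w, g₀ (-w) = g₀ w) (hg₀nn : ∀ w, 0 ≤ g₀ w)
    (hφdiff : Differentiable ℝ φ)
    (hφ' : ∀ v, deriv φ v = -((Real.sqrt (G v / (1 - G v)))⁻¹ * g₀ v)) :
    ∃ g : ℝ → ℝ, (∀ w, g (-w) = g w) ∧ (∀ w, 0 ≤ g w) ∧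
      ∀ v, deriv φ v = -(g v * (deriv G v / G v)) := by
  have hGneg : ∀ v, G (-v) = 1 - G v := by
    intro v
    have := hGsym v
    linarith
  have hder : ∀ v, deriv G (-v) = deriv G v := by
    intro v
    have hG : HasDerivAt G (deriv G (-v)) (-v) := (hGdiff (-v)).hasDerivAt
    have hcomp : HasDerivAt (fun w => G (-w)) (deriv G (-v) * (-1)) v :=
      hG.comp v (hasDerivAt_neg v)
    have h3 : HasDerivAt (fun w => 1 - G (-w)) (-(deriv G (-v) * (-1))) v :=
      hcomp.const_sub 1
    have h1 : G = fun w => 1 - G (-w) := funext hGsym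
    rw [← h1] at h3
    have := h3.deriv
    linarith
  refine ⟨fun v => (Real.sqrt (G v / (1 - G v)))⁻¹ * g₀ v * (G v / deriv G v),
    ?_, ?_, ?_⟩
  · intro w
    obtain ⟨h0, h1⟩ := hG01 w
    simp only [hGneg, hder, hg₀even]
    have hd := (hG'pos w).ne'
    have hA := Real.mul_self_sqrt h0.le
    have hB := Real.mul_self_sqrt (by linarith : (0:ℝ) ≤ 1 - G w)
    have hs1 : Real.sqrt (G w) ≠ 0 := by positivity
    have hs2 : Real.sqrt (1 - G w) ≠ 0 := by
      have : (0:ℝ) < 1 - G w := by linarith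
      positivity
    rw [sub_sub_cancel, Real.sqrt_div (by linarith), Real.sqrt_div h0.le]
    field_simp
    linear_combination (g₀ w * (1 - G w)) * hA -
      (g₀ w * G w) * hB
  · intro w
    obtain ⟨h0, h1⟩ := hG01 w
    have h2 : 0 ≤ G w / deriv G w := div_nonneg h0.le (hG'pos w).le
    exact mul_nonneg (mul_nonneg (by positivity) (hg₀nn w)) h2
  · intro v
    obtain ⟨h0, h1⟩ := hG01 v
    rw [hφ' v]
    have hd := (hG'pos v).ne'
    field_simp
end

section
/- Let G : ℝ → ℝ satisfy 0 < G(v) < 1 and G(v) = 1 − G(−v) for all v, let q(w) = G(w)/(1 − G(w)), and let φ : ℝ → ℝ be differentiable with φ′(v) = −q(v)^{−1/2}·g(v) for all v, where g is even and nonnegative. Then for every f ∈ ℝ, the estimating score is conditionally unbiased under the model Pr(y* = 1) = G(f): G(f)·φ′(f) − (1 − G(f))·φ′(−f) = 0. Equivalently, if y* is a random variable taking value 1 with probability G(f) and −1 with probability 1 − G(f), then E[y*·φ′(y*·f)] = 0. -/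
lemma aux_sqrt (a b : ℝ) (ha : 0 < a) (hb : 0 < b) :
    a * (Real.sqrt (a / b))⁻¹ = Real.sqrt a * Real.sqrt b := by
  rw [Real.sqrt_div ha.le, inv_div]
  have h := Real.mul_self_sqrt ha.le
  field_simp
  nlinarith [Real.sqrt_nonneg b]

/-- for `φ ∈ L_G` (`φ' v = -q(v)^{-1/2}·g(v)`, `g` even nonnegative,
`q = G/(1-G)` the odds of a symmetric CDF `G`), the estimating score is
conditionally unbiased under `Pr(y* = 1) = G f`:
`G f · φ'(f) - (1 - G f) · φ'(-f) = 0`, equivalently `E[y*·φ'(y*·f)] = 0`. -/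
theorem stmt_9 (G g φ : ℝ → ℝ)
    (hG01 : ∀ v, 0 < G v ∧ G v < 1)
    (hGsym : ∀ v, G v = 1 - G (-v))
    (hgeven : ∀ w, g (-w) = g w) (hgnn : ∀ w, 0 ≤ g w)
    (hφdiff : Differentiable ℝ φ)
    (hφ' : ∀ v, deriv φ v = -((Real.sqrt (G v / (1 - G v)))⁻¹ * g v)) :
    ∀ f : ℝ,
      (G f * deriv φ f - (1 - G f) * deriv φ (-f) = 0) ∧
      (G f * ((1:ℝ) * deriv φ ((1:ℝ) * f)) +
        (1 - G f) * ((-1:ℝ) * deriv φ ((-1:ℝ) * f)) = 0) := by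
  intro f
  have ha : 0 < G f := (hG01 f).1
  have hb : 0 < 1 - G f := by linarith [(hG01 f).2]
  have hGneg : G (-f) = 1 - G f := by
    have := hGsym f; linarith
  have key : G f * deriv φ f - (1 - G f) * deriv φ (-f) = 0 := by
    rw [hφ' f, hφ' (-f), hGneg, hgeven]
    have h1 : (1 : ℝ) - (1 - G f) = G f := by ring
    rw [h1]
    have e1 : G f * (Real.sqrt (G f / (1 - G f)))⁻¹ = Real.sqrt (G f) * Real.sqrt (1 - G f) :=
      aux_sqrt _ _ ha hb
    have e2 : (1 - G f) * (Real.sqrt ((1 - G f) / G f))⁻¹ = Real.sqrt (1 - G f) * Real.sqrt (G f) :=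
      aux_sqrt _ _ hb ha
    linear_combination g f * e2 - g f * e1
  refine ⟨key, ?_⟩
  have : ((-1:ℝ) * f) = -f := by ring
  rw [this, one_mul, one_mul]
  linarith [key]
end

section
/- Let G : ℝ → ℝ satisfy 0 < G(v) < 1 and G(v) = 1 − G(−v) for all v, let q(w) = G(w)/(1 − G(w)), and let φ : ℝ → ℝ be differentiable with φ′(v) = −q(v)^{−1/2}·g(v) for all v, where g is even and nonnegative. Then for every f ∈ ℝ, the conditional second moment (variance) of the estimating score under the model Pr(y* = 1) = G(f) equals the squared weight function and does not depend on G: G(f)·(φ′(f))² + (1 − G(f))·(φ′(−f))² = g(f)². -/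
/-- for `φ ∈ L_G` (`φ' v = -q(v)^{-1/2}·g(v)`, `g` even nonnegative,
`q = G/(1-G)` the odds of a symmetric CDF `G`), the conditional second moment of
the estimating score under `Pr(y* = 1) = G f` equals the squared weight:
`G f·(φ'(f))² + (1 - G f)·(φ'(-f))² = g(f)²`, independent of `G`. -/
theorem stmt_11 (G g φ : ℝ → ℝ)
    (hG01 : ∀ v, 0 < G v ∧ G v < 1)
    (hGsym : ∀ v, G v = 1 - G (-v))
    (hgeven : ∀ w, g (-w) = g w) (hgnn : ∀ w, 0 ≤ g w)
    (hφdiff : Differentiable ℝ φ)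
    (hφ' : ∀ v, deriv φ v = -((Real.sqrt (G v / (1 - G v)))⁻¹ * g v)) :
    ∀ f : ℝ, G f * (deriv φ f) ^ 2 + (1 - G f) * (deriv φ (-f)) ^ 2 = (g f) ^ 2 := by
  intro f
  obtain ⟨h0, h1⟩ := hG01 f
  have h1' : (0:ℝ) < 1 - G f := by linarith
  have hGneg : G (-f) = 1 - G f := by
    have := hGsym f; linarith
  have hsq : ∀ x : ℝ, 0 < x → ((Real.sqrt x)⁻¹) ^ 2 = x⁻¹ := by
    intro x hx
    rw [inv_pow, Real.sq_sqrt hx.le]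
  have e1 : (deriv φ f) ^ 2 = (G f / (1 - G f))⁻¹ * g f ^ 2 := by
    rw [hφ' f, neg_pow, mul_pow, hsq _ (by positivity)]
    ring
  have e2 : (deriv φ (-f)) ^ 2 = ((1 - G f) / (G f))⁻¹ * g f ^ 2 := by
    rw [hφ' (-f), hGneg, hgeven f, neg_pow, mul_pow,
      hsq _ (by rw [show (1:ℝ) - (1 - G f) = G f by ring]; positivity)]
    rw [show (1:ℝ) - (1 - G f) = G f by ring]
    ring
  rw [e1, e2]
  field_simp
  ring
end

section
/- Let G : ℝ → ℝ be differentiable with 0 < G(v) < 1 and G(v) = 1 − G(−v) for all v, let q(w) = G(w)/(1 − G(w)), and let g : ℝ → ℝ be differentiable, even, and nonnegative. Let φ : ℝ → ℝ be twice differentiable with φ′(v) = −q(v)^{−1/2}·g(v) for all v. Then for every f ∈ ℝ, the conditional sensitivity of the score under the model Pr(y* = 1) = G(f) satisfies G(f)·φ″(f) + (1 − G(f))·φ″(−f) = G′(f)·g(f)/√(G(f)·(1 − G(f))). -/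
lemma aux12 (G g φ : ℝ → ℝ)
    (hGdiff : Differentiable ℝ G)
    (hgdiff : Differentiable ℝ g)
    (hφ' : ∀ v, deriv φ v = -((Real.sqrt (G v / (1 - G v)))⁻¹ * g v))
    (x : ℝ) (hx0 : 0 < G x) (hx1 : G x < 1) :
    deriv (deriv φ) x =
      deriv G x * g x / (2 * Real.sqrt (G x / (1 - G x)) * G x * (1 - G x))
        - (Real.sqrt (G x / (1 - G x)))⁻¹ * deriv g x := by
  have h1 : (1 : ℝ) - G x ≠ 0 := by linarith
  have hupos : 0 < G x / (1 - G x) := div_pos hx0 (by linarith)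
  have hspos : 0 < Real.sqrt (G x / (1 - G x)) := Real.sqrt_pos.2 hupos
  have hu : HasDerivAt (fun v => G v / (1 - G v))
      ((deriv G x * (1 - G x) - G x * (0 - deriv G x)) / (1 - G x) ^ 2) x :=
    (hGdiff x).hasDerivAt.div ((hasDerivAt_const x 1).sub (hGdiff x).hasDerivAt) h1
  have hs : HasDerivAt (fun v => Real.sqrt (G v / (1 - G v)))
      (1 / (2 * Real.sqrt (G x / (1 - G x))) *
        ((deriv G x * (1 - G x) - G x * (0 - deriv G x)) / (1 - G x) ^ 2)) x :=
    (Real.hasDerivAt_sqrt hupos.ne').comp x hu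
  have hinv := hs.inv hspos.ne'
  have hF := (hinv.mul (hgdiff x).hasDerivAt).neg
  have heq : deriv φ = fun v => -((Real.sqrt (G v / (1 - G v)))⁻¹ * g v) := funext hφ'
  rw [heq, show (fun v => -((Real.sqrt (G v / (1 - G v)))⁻¹ * g v)) =
      -((fun v => Real.sqrt (G v / (1 - G v)))⁻¹ * g) from rfl, hF.deriv, Pi.inv_apply]
  have hsq : Real.sqrt (G x / (1 - G x)) ^ 2 = G x / (1 - G x) :=
    Real.sq_sqrt hupos.le
  rw [hsq]
  field_simp
  ring

/-- for a twice differentiable `φ ∈ L_G`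
(`φ' v = -q(v)^{-1/2}·g(v)` with `g` differentiable, even, nonnegative,
`q = G/(1-G)` the odds of a differentiable symmetric CDF `G`), the conditional
sensitivity of the score under `Pr(y* = 1) = G f` is
`G f·φ''(f) + (1 - G f)·φ''(-f) = G'(f)·g(f)/√(G f·(1 - G f))`. -/
theorem stmt_12 (G g φ : ℝ → ℝ)
    (hGdiff : Differentiable ℝ G)
    (hG01 : ∀ v, 0 < G v ∧ G v < 1)
    (hGsym : ∀ v, G v = 1 - G (-v))
    (hgdiff : Differentiable ℝ g)
    (hgeven : ∀ w, g (-w) = g w) (hgnn : ∀ w, 0 ≤ g w)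
    (hφdiff : Differentiable ℝ φ)
    (hφ'diff : Differentiable ℝ (deriv φ))
    (hφ' : ∀ v, deriv φ v = -((Real.sqrt (G v / (1 - G v)))⁻¹ * g v)) :
    ∀ f : ℝ,
      G f * deriv (deriv φ) f + (1 - G f) * deriv (deriv φ) (-f) =
        deriv G f * g f / Real.sqrt (G f * (1 - G f)) := by
  intro f
  obtain ⟨ha0, ha1⟩ := hG01 f
  have hGneg : G (-f) = 1 - G f := by have := hGsym f; linarith
  -- deriv G (-f) = deriv G f
  have hG1 : HasDerivAt (fun v => G (-v)) (deriv G (-f) * (-1)) f :=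
    (hGdiff (-f)).hasDerivAt.comp f (hasDerivAt_neg f)
  have hGfun : (fun v => G (-v)) = fun v => 1 - G v := by
    funext v; have := hGsym v; linarith
  have hG2 : HasDerivAt (fun v => G (-v)) (0 - deriv G f) f := by
    rw [hGfun]; exact (hasDerivAt_const f 1).sub (hGdiff f).hasDerivAt
  have hdGneg : deriv G (-f) = deriv G f := by
    have := hG1.unique hG2; linarith
  -- deriv g (-f) = - deriv g f
  have hg1 : HasDerivAt (fun v => g (-v)) (deriv g (-f) * (-1)) f :=
    (hgdiff (-f)).hasDerivAt.comp f (hasDerivAt_neg f)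
  have hgfun : (fun v => g (-v)) = g := funext hgeven
  have hg2 : HasDerivAt (fun v => g (-v)) (deriv g f) f := by
    rw [hgfun]; exact (hgdiff f).hasDerivAt
  have hdgneg : deriv g (-f) = -deriv g f := by
    have := hg1.unique hg2; linarith
  have e1 := aux12 G g φ hGdiff hgdiff hφ' f ha0 ha1
  have e2 := aux12 G g φ hGdiff hgdiff hφ' (-f) (by rw [hGneg]; linarith)
    (by rw [hGneg]; linarith)
  rw [hGneg, hdGneg, hgeven f, hdgneg] at e2
  rw [e1, e2]
  have h1a : (1 : ℝ) - (1 - G f) = G f := by ring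
  rw [h1a]
  set c := Real.sqrt (G f) with hc
  set d := Real.sqrt (1 - G f) with hd
  have hc0 : 0 < c := Real.sqrt_pos.2 ha0
  have hd0 : 0 < d := Real.sqrt_pos.2 (by linarith)
  have hcd : Real.sqrt (G f * (1 - G f)) = c * d := Real.sqrt_mul ha0.le _
  have h1 : Real.sqrt (G f / (1 - G f)) = c / d := Real.sqrt_div ha0.le _
  have h2 : Real.sqrt ((1 - G f) / G f) = d / c := Real.sqrt_div (by linarith) _
  rw [hcd, h1, h2]
  have hc2 : G f = c ^ 2 := (Real.sq_sqrt ha0.le).symm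
  have hd2 : (1 : ℝ) - G f = d ^ 2 := (Real.sq_sqrt (by linarith : (0:ℝ) ≤ 1 - G f)).symm
  rw [hd2, hc2]
  field_simp
  ring
end

section
/- Let y* ∈ {−1, 1}, set y = (y* + 1)/2, let F(v) = (1 + e^{−v})^{−1}, and define S(f) = (y − F(f))/√(F(f)·(1 − F(f))) for f ∈ ℝ. Let v₁, …, v_M ∈ ℝ and v = v₁ + ⋯ + v_M. Then the standardized logistic regression residual partitions multiplicatively: S(v) = (y*)^{M+1} · ∏_{m=1}^{M} S(v_m), and in particular S(v)² = ∏_{m=1}^{M} S(v_m)². -/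
open Finset

lemma he' (f : ℝ) : Real.exp (-f/2) ^ 2 = Real.exp (-f) := by
  rw [sq, ← Real.exp_add]; ring_nf

lemma sqrt_FF (f : ℝ) :
    Real.sqrt ((1 + Real.exp (-f))⁻¹ * (1 - (1 + Real.exp (-f))⁻¹))
      = Real.exp (-f/2) / (1 + Real.exp (-f)) := by
  have hpos : (0:ℝ) < 1 + Real.exp (-f) := by positivity
  have h1 : (1 + Real.exp (-f))⁻¹ * (1 - (1 + Real.exp (-f))⁻¹)
      = (Real.exp (-f/2) / (1 + Real.exp (-f)))^2 := by
    rw [div_pow, he']; field_simp; ring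
  rw [h1, Real.sqrt_sq (by positivity)]

lemma S_eq (ystar : ℝ) (hy : ystar = -1 ∨ ystar = 1) (f : ℝ) :
    ((ystar + 1)/2 - (1 + Real.exp (-f))⁻¹) /
      Real.sqrt ((1 + Real.exp (-f))⁻¹ * (1 - (1 + Real.exp (-f))⁻¹))
      = ystar * Real.exp (-(ystar * f)/2) := by
  have hpos : (0:ℝ) < 1 + Real.exp (-f) := by positivity
  have he := he' f
  rw [sqrt_FF, div_eq_iff (by positivity)]
  rcases hy with h | h <;> subst h
  · rw [show -(-1*f:ℝ)/2 = f/2 by ring]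
    have hprod : Real.exp (f/2) * Real.exp (-f/2) = 1 := by
      rw [← Real.exp_add, show (f:ℝ)/2 + -f/2 = 0 by ring, Real.exp_zero]
    field_simp
    simp only [neg_div] at *
    linear_combination 2 * hprod
  · field_simp
    simp only [neg_div] at *
    linear_combination -2 * he

/-- the standardized logistic regression residual partitions
multiplicatively over an additive decomposition of the margin:
`S(v₁ + ⋯ + v_M) = (y*)^{M+1} · ∏ₘ S(vₘ)` and `S(v₁ + ⋯ + v_M)² = ∏ₘ S(vₘ)²`. -/
theorem stmt_14 (ystar : ℝ) (hy : ystar = -1 ∨ ystar = 1)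
    (M : ℕ) (v : Fin M → ℝ) :
    let y : ℝ := (ystar + 1) / 2
    let F : ℝ → ℝ := fun u => (1 + Real.exp (-u))⁻¹
    let S : ℝ → ℝ := fun f => (y - F f) / Real.sqrt (F f * (1 - F f))
    S (∑ m, v m) = ystar ^ (M + 1) * ∏ m, S (v m) ∧
    (S (∑ m, v m)) ^ 2 = ∏ m, (S (v m)) ^ 2 := by
  intro y F S
  have hS : ∀ f, S f = ystar * Real.exp (-(ystar * f)/2) := fun f => S_eq ystar hy f
  have hy2 : ystar ^ 2 = 1 := by rcases hy with h | h <;> simp [h]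
  have key : S (∑ m, v m) = ystar ^ (M + 1) * ∏ m, S (v m) := by
    simp only [hS]
    rw [Finset.prod_mul_distrib, Finset.prod_const, ← Real.exp_sum]
    have hsum : ∑ m : Fin M, -(ystar * v m)/2 = -(ystar * ∑ m, v m)/2 := by
      rw [Finset.mul_sum]
      simp [neg_div, Finset.sum_div]
    rw [Finset.card_univ, Fintype.card_fin, hsum]
    have h3 : ystar ^ (M+1) * (ystar ^ M * Real.exp (-(ystar * ∑ m, v m)/2))
        = (ystar^2)^M * (ystar * Real.exp (-(ystar * ∑ m, v m)/2)) := by ring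
    rw [h3, hy2, one_pow, one_mul]
  refine ⟨key, ?_⟩
  rw [key, mul_pow, ← pow_mul, ← Finset.prod_pow]
  have h4 : ystar ^ ((M+1)*2) = 1 := by
    rw [mul_comm, pow_mul, hy2, one_pow]
  rw [h4, one_mul]
end

section
/- Let (x₁, y₁*), …, (x_n, y_n*) be data with y_i* ∈ {−1, 1}, set y_i = (y_i* + 1)/2, let F(v) = (1 + e^{−v})^{−1}, and for a function f define S_i(f) = (y_i − F(f(x_i)))/√(F(f(x_i))·(1 − F(f(x_i)))). Then exp(−y_i*·f(x_i)) = S_i(f)² for every i, and hence the empirical exponential risk equals the mean of squared standardized logistic regression residuals: (1/n)·Σ_{i=1}^{n} exp(−y_i*·f(x_i)) = (1/n)·Σ_{i=1}^{n} S_i(f)². In particular, minimizing empirical exponential loss is equivalent to minimizing the sum of squared standardized logistic regression residuals. -/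
open Finset

lemma aux_key (v : ℝ) (b : ℝ) (hb : b = -1 ∨ b = 1) :
    Real.exp (-(b * v)) =
      (((b + 1) / 2 - (1 + Real.exp (-v))⁻¹) /
        Real.sqrt ((1 + Real.exp (-v))⁻¹ * (1 - (1 + Real.exp (-v))⁻¹))) ^ 2 := by
  have he : 0 < Real.exp (-v) := Real.exp_pos _
  have hd : 0 < 1 + Real.exp (-v) := by linarith
  have hF : (0:ℝ) < (1 + Real.exp (-v))⁻¹ := by positivity
  have hF1 : (1 + Real.exp (-v))⁻¹ < 1 := by
    rw [inv_lt_one_iff₀]; right; linarith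
  have hprod : 0 < (1 + Real.exp (-v))⁻¹ * (1 - (1 + Real.exp (-v))⁻¹) := by
    apply mul_pos hF; linarith
  rw [div_pow, Real.sq_sqrt hprod.le]
  have hev : Real.exp v = (Real.exp (-v))⁻¹ := by
    rw [← Real.exp_neg, neg_neg]
  rcases hb with hb | hb <;> subst hb
  · simp only [neg_one_mul, neg_neg]
    rw [hev]
    field_simp
    ring
  · simp only [one_mul]
    field_simp
    ring

/-- for data `(xᵢ, yᵢ*)` with `yᵢ* ∈ {-1,1}` and standardized
logistic regression residuals `Sᵢ(f) = (yᵢ - F(f xᵢ))/√(F(f xᵢ)(1 - F(f xᵢ)))`,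
one has `exp(-yᵢ*·f(xᵢ)) = Sᵢ(f)²` for every `i`, and hence the empirical
exponential risk equals the mean of squared residuals. -/
theorem stmt_16 (X : Type*) (n : ℕ) (hn : 0 < n)
    (x : Fin n → X) (ystar : Fin n → ℝ)
    (hy : ∀ i, ystar i = -1 ∨ ystar i = 1) (f : X → ℝ) :
    let y : Fin n → ℝ := fun i => (ystar i + 1) / 2
    let F : ℝ → ℝ := fun u => (1 + Real.exp (-u))⁻¹
    let S : Fin n → ℝ := fun i =>
      (y i - F (f (x i))) / Real.sqrt (F (f (x i)) * (1 - F (f (x i))))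
    (∀ i, Real.exp (-(ystar i * f (x i))) = (S i) ^ 2) ∧
    (1 / (n : ℝ)) * ∑ i, Real.exp (-(ystar i * f (x i))) =
      (1 / (n : ℝ)) * ∑ i, (S i) ^ 2 := by
  intro y F S
  have h : ∀ i, Real.exp (-(ystar i * f (x i))) = (S i) ^ 2 := fun i =>
    aux_key (f (x i)) (ystar i) (hy i)
  exact ⟨h, by rw [Finset.sum_congr rfl fun i _ => h i]⟩
end

section
/- Let X be a type, let (x₁, y₁*), …, (x_n, y_n*) be data with x_i ∈ X and y_i* ∈ {−1, 1}, and let 𝓕 be a set of functions X → ℝ closed under multiplication by positive scalars. For p > 0 define the p-norm objective L_p(f) = Σ_{i=1}^{n} exp(−y_i*·f(x_i)·p/2), which equals Σ_i |S_i(f)|^p for the standardized logistic regression residuals S_i(f). Then for any p, l > 0: (i) f̂ minimizes L_l over 𝓕 if and only if (l/p)·f̂ minimizes L_p over 𝓕 (so minimizers satisfy f̂_p = (l/p)·f̂_l); and (ii) the infimum of L_p over 𝓕 does not depend on p. Consequently the induced classifier sign(f̂_p(x)) is the same for all p. -/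
set_option maxHeartbeats 1000000


open Finset

/-- for the p-norm objective
`L_p f = Σᵢ exp(-yᵢ*·f(xᵢ)·p/2) = Σᵢ |Sᵢ(f)|^p` over a class `𝓕` closed under
positive scaling: (i) `f` minimizes `L_l` over `𝓕` iff `(l/p)·f` minimizes `L_p`
over `𝓕`; (ii) the infimum of `L_p` over `𝓕` does not depend on `p`; and
consequently the induced classifier `sign(f̂_p(x))` is the same for all `p`. -/
theorem stmt_17 (X : Type*) (n : ℕ) (x : Fin n → X) (ystar : Fin n → ℝ)
    (hy : ∀ i, ystar i = -1 ∨ ystar i = 1)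
    (𝓕 : Set (X → ℝ))
    (hclosed : ∀ c : ℝ, 0 < c → ∀ f ∈ 𝓕, (fun a => c * f a) ∈ 𝓕) :
    let L : ℝ → (X → ℝ) → ℝ :=
      fun p f => ∑ i, Real.exp (-(ystar i * f (x i)) * p / 2)
    (∀ p l : ℝ, 0 < p → 0 < l → ∀ f ∈ 𝓕,
      ((∀ f' ∈ 𝓕, L l f ≤ L l f') ↔
        ((fun a => (l / p) * f a) ∈ 𝓕 ∧
          ∀ f' ∈ 𝓕, L p (fun a => (l / p) * f a) ≤ L p f'))) ∧
    (∀ p l : ℝ, 0 < p → 0 < l →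
      sInf ((fun f => L p f) '' 𝓕) = sInf ((fun f => L l f) '' 𝓕)) ∧
    (∀ p l : ℝ, 0 < p → 0 < l → ∀ f ∈ 𝓕, ∀ a : X,
      Real.sign ((l / p) * f a) = Real.sign (f a)) := by
  intro L
  have key : ∀ (c p : ℝ) (f : X → ℝ), L p (fun a => c * f a) = L (c * p) f := by
    intro c p f
    apply Finset.sum_congr rfl
    intro i _
    congr 1
    ring
  have scale : ∀ (p l : ℝ), p ≠ 0 → ∀ f : X → ℝ,
      L p (fun a => (l / p) * f a) = L l f := by
    intro p l hp f
    rw [key, div_mul_cancel₀ l hp]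
  refine ⟨?_, ?_, ?_⟩
  · intro p l hp hl f hf
    constructor
    · intro hmin
      refine ⟨hclosed (l / p) (div_pos hl hp) f hf, ?_⟩
      intro f' hf'
      have h1 : L l f ≤ L l (fun a => (p / l) * f' a) :=
        hmin (fun a => (p / l) * f' a) (hclosed (p / l) (div_pos hp hl) f' hf')
      rw [scale l p hl.ne' f'] at h1
      rw [scale p l hp.ne' f]
      exact h1
    · rintro ⟨-, hmin⟩ f' hf'
      have h2 : L p (fun a => (l / p) * f a) ≤ L p (fun a => (l / p) * f' a) :=
        hmin (fun a => (l / p) * f' a) (hclosed (l / p) (div_pos hl hp) f' hf')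
      rw [scale p l hp.ne' f, scale p l hp.ne' f'] at h2
      exact h2
  · intro p l hp hl
    have himg : (fun f => L p f) '' 𝓕 = (fun f => L l f) '' 𝓕 := by
      ext v
      constructor
      · rintro ⟨f, hf, rfl⟩
        exact ⟨fun a => (p / l) * f a, hclosed (p / l) (div_pos hp hl) f hf,
          scale l p hl.ne' f⟩
      · rintro ⟨f, hf, rfl⟩
        exact ⟨fun a => (l / p) * f a, hclosed (l / p) (div_pos hl hp) f hf,
          scale p l hp.ne' f⟩
    rw [himg]
  · intro p l hp hl f hf a
    have hc : 0 < l / p := div_pos hl hp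
    rcases lt_trichotomy (f a) 0 with h | h | h
    · rw [Real.sign_of_neg h, Real.sign_of_neg (mul_neg_of_pos_of_neg hc h)]
    · rw [h, mul_zero]
    · rw [Real.sign_of_pos h, Real.sign_of_pos (mul_pos hc h)]
end
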